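/- Let f_0,...,f_n be Laurent polynomials over a product S × T^n where S is a smooth projective curve and T^n is the n-torus, with coefficients that are global sections of line bundles L_0,...,L_n on S. If the lattice L_A generated by the differences of the exponent vectors of the f_i's has rank strictly less than n, then the system f_0 = ... = f_n = 0 has no isolated solutions in S × T^n. -/

import Mathlib

/-! If the lattice generated by the differences of the exponent vectors of the Laurent
polynomials f₀,…,f_n on S × Tⁿ has rank < n, then the system f₀ = ⋯ = f_n = 0 has no
isolated solutions in S × Tⁿ. -/

noncomputable section

/-- An interface for a smooth projective curve `S` over `K`, together with its line
bundles, their global sections, orders of vanishing at points, degrees, and values of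
sections at points (in a fixed choice of local trivializations). -/
structure SmoothProjCurve (K : Type*) [Field K] where
  /-- the points of the curve -/
  Point : Type*
  /-- the Zariski topology of the curve -/
  top : TopologicalSpace Point
  /-- line bundles on the curve -/
  LineBundle : Type*
  /-- the degree of a line bundle -/
  deg : LineBundle → ℤ
  /-- global sections of a line bundle -/
  Sect : LineBundle → Type*
  /-- the zero section -/
  zero : ∀ L, Sect L
  /-- the order of vanishing of a global section at a point (junk at the zero section) -/
  ord : ∀ {L : LineBundle}, Sect L → Point → ℕ
  /-- a nonzero section vanishes at only finitely many points -/
  ord_finite : ∀ {L : LineBundle} (σ : Sect L), σ ≠ zero L → {v | ord σ v ≠ 0}.Finite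
  /-- the value of a section at a point, in the chosen trivialization -/
  ev : ∀ {L : LineBundle}, Sect L → Point → K
  /-- a nonzero section vanishes at `v` exactly when its order at `v` is positive -/
  ev_eq_zero_iff : ∀ {L : LineBundle} (σ : Sect L) (v : Point),
    σ ≠ zero L → (ev σ v = 0 ↔ 0 < ord σ v)

end

noncomputable section

/-- Laurent polynomials in `n` variables over `K`. -/
abbrev LaurentPoly (n : ℕ) (K : Type*) [CommRing K] := AddMonoidAlgebra K (Fin n → ℤ)

/-- The character of the lattice `ℤⁿ` attached to a point of the torus `(K*)ⁿ`. -/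
def torusChar (n : ℕ) {K : Type*} [Field K] (ξ : Fin n → Kˣ) :
    Multiplicative (Fin n → ℤ) →* K where
  toFun a := ((∏ i, ξ i ^ (Multiplicative.toAdd a i) : Kˣ) : K)
  map_one' := by simp
  map_mul' a b := by
    push_cast [← Finset.prod_mul_distrib]
    congr 1
    ext i
    rw [← zpow_add₀ (Units.ne_zero (ξ i))]
    rfl

/-- Evaluation of a Laurent polynomial at a point of the torus. -/
def torusEval (n : ℕ) {K : Type*} [Field K] (ξ : Fin n → Kˣ) : LaurentPoly n K →ₐ[K] K :=
  AddMonoidAlgebra.lift K K (Fin n → ℤ) (torusChar n ξ)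

/-- The Zariski topology on the torus `(K*)ⁿ`, induced from the Zariski topology on the
prime spectrum of the ring of Laurent polynomials. -/
def torusTop (n : ℕ) (K : Type*) [Field K] : TopologicalSpace (Fin n → Kˣ) :=
  TopologicalSpace.induced
    (fun ξ => (⟨RingHom.ker (torusEval n ξ).toRingHom, RingHom.ker_isPrime _⟩ :
      PrimeSpectrum (LaurentPoly n K)))
    inferInstance

/-- `x` is an isolated point of `Z` for the topology `τ`. -/
def IsIsolatedPt {X : Type*} (τ : TopologicalSpace X) (Z : Set X) (x : X) : Prop :=
  x ∈ Z ∧ ∃ U ∈ @nhds X τ x, U ∩ Z ⊆ {x}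

/-- The product topology. -/
def prodTop {X Y : Type*} (τ₁ : TopologicalSpace X) (τ₂ : TopologicalSpace Y) :
    TopologicalSpace (X × Y) :=
  @instTopologicalSpaceProd X Y τ₁ τ₂

end

private lemma zpow_sum' {G : Type*} [CommGroup G] (g : G) {α : Type*} (s : Finset α) (c : α → ℤ) :
    g ^ (∑ i ∈ s, c i) = ∏ i ∈ s, g ^ c i := by
  induction s using Finset.cons_induction with
  | empty => simp
  | cons a s ha ih => rw [Finset.sum_cons, Finset.prod_cons, zpow_add, ih]

private lemma prod_units_pow {K : Type*} [Field K] {n : ℕ} (ξ : Fin n → Kˣ) (lam : Kˣ)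
    (w b : Fin n → ℤ) :
    (∏ k, (ξ k * lam ^ w k) ^ b k) = (∏ k, ξ k ^ b k) * lam ^ (∑ k, w k * b k) := by
  rw [zpow_sum', ← Finset.prod_mul_distrib]
  refine Finset.prod_congr rfl fun k _ => ?_
  rw [mul_zpow, ← zpow_mul]

private lemma torusEval_apply {K : Type*} [Field K] {n : ℕ} (ξ : Fin n → Kˣ)
    (f : LaurentPoly n K) :
    torusEval n ξ f = ∑ b ∈ f.coeff.support, f.coeff b * ((∏ k, ξ k ^ b k : Kˣ) : K) := by
  simp [torusEval, AddMonoidAlgebra.lift_apply, torusChar, Finsupp.sum, smul_eq_mul]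

private lemma rootsOfUnity_finite {K : Type*} [Field K] {m : ℤ} (hm : m ≠ 0) :
    {lam : Kˣ | lam ^ m = 1}.Finite := by
  have hd : m.natAbs ≠ 0 := Int.natAbs_ne_zero.mpr hm
  have hsub : {lam : Kˣ | lam ^ m = 1} ⊆
      Units.val ⁻¹' {x : K | Polynomial.IsRoot (Polynomial.X ^ m.natAbs - Polynomial.C 1) x} := by
    intro lam hl
    have h1 : lam ^ (m.natAbs : ℤ) = 1 := by
      rcases Int.natAbs_eq m with h | h
      · rw [← h]; exact hl
      · rw [show (m.natAbs : ℤ) = -m by omega, zpow_neg, hl, inv_one]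
    have h2 : (lam : K) ^ m.natAbs = 1 := by
      have := congrArg Units.val h1
      rwa [zpow_natCast, Units.val_pow_eq_pow_val, Units.val_one] at this
    simp [Polynomial.IsRoot, h2]
  refine Set.Finite.subset (Set.Finite.preimage (Function.Injective.injOn Units.val_injective) ?_) hsub
  exact Polynomial.finite_setOf_isRoot (Polynomial.X_pow_sub_C_ne_zero (Nat.pos_of_ne_zero hd) 1)
private lemma torusEval_twist {K : Type*} [Field K] {n : ℕ} (ξ : Fin n → Kˣ) (lam : Kˣ)
    (w : Fin n → ℤ) (f : LaurentPoly n K) :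
    torusEval n (fun k => ξ k * lam ^ w k) f =
      ∑ b ∈ f.coeff.support, f.coeff b * ((∏ k, ξ k ^ b k : Kˣ) : K) * (lam : K) ^ (∑ k, w k * b k) := by
  rw [torusEval_apply]
  refine Finset.sum_congr rfl fun b _ => ?_
  rw [prod_units_pow, Units.val_mul, ← mul_assoc]
  congr 1
  exact ((Units.coeHom K).map_zpow lam _)

private lemma key_finite {K : Type*} [Field K] {n : ℕ} (ξ : Fin n → Kˣ) (w : Fin n → ℤ)
    (f : LaurentPoly n K) (hf : torusEval n ξ f ≠ 0) :
    {lam : Kˣ | torusEval n (fun k => ξ k * lam ^ w k) f = 0}.Finite := by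
  classical
  set e : (Fin n → ℤ) → ℤ := fun b => ∑ k, w k * b k with he
  set M : ℕ := f.coeff.support.sup fun b => (-(e b)).toNat with hM
  have hMle : ∀ b ∈ f.coeff.support, 0 ≤ e b + (M : ℤ) := by
    intro b hb
    have h1 : (-(e b)).toNat ≤ M := Finset.le_sup (f := fun b => (-(e b)).toNat) hb
    omega
  set Q : Polynomial K := ∑ b ∈ f.coeff.support,
    Polynomial.C (f.coeff b * ((∏ k, ξ k ^ b k : Kˣ) : K)) * Polynomial.X ^ (e b + M).toNat with hQ
  have hQ1 : Q.eval 1 = torusEval n ξ f := by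
    rw [torusEval_apply, hQ, Polynomial.eval_finset_sum]
    refine Finset.sum_congr rfl fun b _ => ?_
    rw [Polynomial.eval_mul, Polynomial.eval_C, Polynomial.eval_pow, Polynomial.eval_X,
      one_pow, mul_one]
  have hQ0 : Q ≠ 0 := fun h => hf (by rw [← hQ1, h, Polynomial.eval_zero])
  have hQeval : ∀ lam : Kˣ, Q.eval (lam : K) =
      (lam : K) ^ (M : ℤ) * torusEval n (fun k => ξ k * lam ^ w k) f := by
    intro lam
    rw [torusEval_twist, hQ, Polynomial.eval_finset_sum, Finset.mul_sum]
    refine Finset.sum_congr rfl fun b hb => ?_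
    have hnn := hMle b hb
    rw [Polynomial.eval_mul, Polynomial.eval_C, Polynomial.eval_pow, Polynomial.eval_X]
    rw [show (lam : K) ^ (e b + M).toNat = (lam : K) ^ ((e b + M : ℤ)) by
      rw [← zpow_natCast, Int.toNat_of_nonneg hnn]]
    rw [zpow_add₀ (Units.ne_zero lam)]
    ring
  have hsub : {lam : Kˣ | torusEval n (fun k => ξ k * lam ^ w k) f = 0} ⊆
      Units.val ⁻¹' {x : K | Polynomial.IsRoot Q x} := by
    intro lam hl
    simp only [Set.mem_setOf_eq] at hl
    simp only [Set.mem_preimage, Set.mem_setOf_eq, Polynomial.IsRoot]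
    rw [hQeval lam, hl, mul_zero]
  exact Set.Finite.subset (Set.Finite.preimage (Function.Injective.injOn Units.val_injective)
    (Polynomial.finite_setOf_isRoot hQ0)) hsub
private lemma exists_orth {n : ℕ} (S : Set (Fin n → ℤ))
    (hrk : Module.finrank ℤ (Submodule.span ℤ S) < n) :
    ∃ w : Fin n → ℤ, w ≠ 0 ∧ ∀ s ∈ S, ∑ k, w k * s k = 0 := by
  classical
  set W := Submodule.span ℤ S with hW
  set r := Module.finrank ℤ W with hr
  let b := Module.finBasis ℤ W
  let cst : (Fin n → ℤ) →ₗ[ℤ] (Fin n → ℚ) :=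
    { toFun := fun s k => (s k : ℚ)
      map_add' := fun x y => by funext k; simp
      map_smul' := fun z x => by funext k; simp }
  let g : Fin r → (Fin n → ℚ) := fun i => cst ((b i : Fin n → ℤ))
  have hsub : ∀ s ∈ S, cst s ∈ Submodule.span ℚ (Set.range g) := by
    intro s hs
    have hsW : s ∈ W := Submodule.subset_span hs
    have hrepr : ((⟨s, hsW⟩ : W) : Fin n → ℤ) =
        ∑ i, b.repr ⟨s, hsW⟩ i • ((b i : Fin n → ℤ)) := by
      conv_lhs => rw [← b.sum_repr ⟨s, hsW⟩]
      push_cast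
      rfl
    have : cst s = ∑ i, (b.repr ⟨s, hsW⟩ i : ℚ) • g i := by
      have := congrArg cst hrepr
      simp only [map_sum, map_zsmul] at this
      simpa [g, Int.cast_smul_eq_zsmul] using this
    rw [this]
    exact Submodule.sum_mem _ fun i _ =>
      Submodule.smul_mem _ _ (Submodule.subset_span (Set.mem_range_self i))
  have hfr : Module.finrank ℚ (Submodule.span ℚ (Set.range g)) < n := by
    have h1 : Module.finrank ℚ (Submodule.span ℚ (Set.range g)) ≤ r := by
      have := finrank_span_le_card (R := ℚ) (Set.range g)
      refine this.trans ?_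
      rw [Set.toFinset_range]
      exact (Finset.card_image_le).trans (by simp)
    omega
  have hlt : Submodule.span ℚ (Set.range g) < ⊤ := by
    rcases lt_or_eq_of_le (le_top (a := Submodule.span ℚ (Set.range g))) with h | h
    · exact h
    · exfalso
      rw [h] at hfr
      rw [finrank_top, Module.finrank_pi] at hfr
      simp at hfr
  obtain ⟨φ, hφ0, hφ⟩ := Submodule.exists_dual_map_eq_bot_of_lt_top hlt inferInstance
  have hφS : ∀ s ∈ S, φ (cst s) = 0 := by
    intro s hs
    have : φ (cst s) ∈ Submodule.map φ (Submodule.span ℚ (Set.range g)) :=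
      Submodule.mem_map_of_mem (hsub s hs)
    rwa [hφ, Submodule.mem_bot] at this
  set rk : Fin n → ℚ := fun k => φ (fun j => if k = j then 1 else 0) with hrk'
  have hφx : ∀ x : Fin n → ℚ, φ x = ∑ k, x k * rk k := by
    intro x
    rw [LinearMap.pi_apply_eq_sum_univ]
    exact Finset.sum_congr rfl fun k _ => by rw [smul_eq_mul]
  have hrkne : ∃ k, rk k ≠ 0 := by
    by_contra h
    push_neg at h
    refine hφ0 (LinearMap.ext fun x => ?_)
    rw [hφx x]
    simp [h]
  set D : ℚ := ∏ l, ((rk l).den : ℚ) with hD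
  have hDne : D ≠ 0 := Finset.prod_ne_zero_iff.mpr fun l _ => by
    exact_mod_cast (rk l).den_nz
  set w : Fin n → ℤ := fun k => (rk k).num * ∏ l ∈ Finset.univ.erase k, ((rk l).den : ℤ) with hw
  have hwc : ∀ k, (w k : ℚ) = rk k * D := by
    intro k
    have hnum : ((rk k).num : ℚ) = rk k * ((rk k).den : ℚ) := by
      have hden : ((rk k).den : ℚ) ≠ 0 := by exact_mod_cast (rk k).den_nz
      have h := Rat.num_div_den (rk k)
      rw [div_eq_iff hden] at h
      rw [h]
    rw [hw]
    push_cast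
    rw [hnum, hD, ← Finset.mul_prod_erase _ _ (Finset.mem_univ k)]
    ring
  refine ⟨w, ?_, ?_⟩
  · obtain ⟨k, hk⟩ := hrkne
    intro h
    have h0 : w k = 0 := by rw [h]; rfl
    have := hwc k
    rw [h0] at this
    exact mul_ne_zero hk hDne (by exact_mod_cast this.symm)
  · intro s hs
    have hQ : ((∑ k, w k * s k : ℤ) : ℚ) = 0 := by
      push_cast
      have : ∑ k, (w k : ℚ) * (s k : ℚ) = D * φ (cst s) := by
        rw [hφx (cst s), Finset.mul_sum]
        refine Finset.sum_congr rfl fun k _ => ?_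
        rw [hwc k]
        show rk k * D * (s k : ℚ) = D * ((s k : ℚ) * rk k)
        ring
      rw [this, hφS s hs, mul_zero]
    exact_mod_cast hQ
theorem no_isolated_solutions_of_small_rank (K : Type*) [Field K] [IsAlgClosed K]
    (C : SmoothProjCurve K) (n : ℕ)
    (Lb : Fin (n + 1) → C.LineBundle) (N : Fin (n + 1) → ℕ)
    (σ : ∀ i, Fin (N i + 1) → C.Sect (Lb i))
    (a : ∀ i, Fin (N i + 1) → (Fin n → ℤ))
    (hσ : ∀ i j, σ i j ≠ C.zero (Lb i))
    -- the lattice generated by the differences of exponent vectors has rank < n: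
    (hrk : Module.finrank ℤ
      (Submodule.span ℤ {b : Fin n → ℤ | ∃ i j, b = a i j - a i 0}) < n) :
    -- then no point of `S × Tⁿ` is an isolated point of the zero set of the system:
    ∀ p : C.Point × (Fin n → Kˣ),
      ¬ IsIsolatedPt (prodTop C.top (torusTop n K))
        {q : C.Point × (Fin n → Kˣ) |
          ∀ i, ∑ j, C.ev (σ i j) q.1 * ((∏ k, q.2 k ^ a i j k : Kˣ) : K) = 0} p := by
  classical
  rintro ⟨v, ξ⟩ ⟨hpZ, U, hU, hUsub⟩
  simp only [Set.mem_setOf_eq] at hpZ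
  -- get the orthogonal vector w
  obtain ⟨w, hw0, hworth⟩ := exists_orth {b : Fin n → ℤ | ∃ i j, b = a i j - a i 0} hrk
  obtain ⟨k0, hk0⟩ : ∃ k, w k ≠ 0 := by
    by_contra h; push_neg at h; exact hw0 (funext h)
  have he : ∀ i j, (∑ k, w k * a i j k) = ∑ k, w k * a i 0 k := by
    intro i j
    have h1 := hworth _ ⟨i, j, rfl⟩
    have h2 : ∑ k, (w k * a i j k - w k * a i 0 k) = 0 := by
      refine Eq.trans (Finset.sum_congr rfl fun k _ => ?_) h1
      simp [mul_sub]
    rw [Finset.sum_sub_distrib] at h2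
    omega
  -- unfold the product neighborhood
  letI : TopologicalSpace C.Point := C.top
  letI : TopologicalSpace (Fin n → Kˣ) := torusTop n K
  have hU' : U ∈ @nhds _ (@instTopologicalSpaceProd _ _ C.top (torusTop n K)) (v, ξ) := hU
  rw [mem_nhds_prod_iff] at hU'
  obtain ⟨U₁, hU₁, U₂, hU₂, hUprod⟩ := hU'
  -- unfold the induced topology on the torus
  set ι : (Fin n → Kˣ) → PrimeSpectrum (LaurentPoly n K) :=
    fun ζ => (⟨RingHom.ker (torusEval n ζ).toRingHom, RingHom.ker_isPrime _⟩ :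
      PrimeSpectrum (LaurentPoly n K)) with hι
  have hU₂' : U₂ ∈ @nhds _ (TopologicalSpace.induced ι inferInstance) ξ := hU₂
  rw [nhds_induced, Filter.mem_comap] at hU₂'
  obtain ⟨O', hO', hpre⟩ := hU₂'
  obtain ⟨t, ⟨f, rfl⟩, hmem, hsubO⟩ :=
    PrimeSpectrum.isTopologicalBasis_basic_opens.mem_nhds_iff.mp hO'
  have hfne : torusEval n ξ f ≠ 0 := by
    intro h
    exact (PrimeSpectrum.mem_basicOpen f _).mp hmem (by rwa [RingHom.mem_ker])
  -- finite bad sets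
  have hbad1 := key_finite ξ w f hfne
  have hbad2 : {lam : Kˣ | (fun k => ξ k * lam ^ w k) = ξ}.Finite := by
    refine Set.Finite.subset (rootsOfUnity_finite (K := K) hk0) fun lam hl => ?_
    have := congrFun hl k0
    simpa using mul_eq_left.mp this
  have hbadK : (Units.val '' ({lam : Kˣ | torusEval n (fun k => ξ k * lam ^ w k) f = 0}
      ∪ {lam : Kˣ | (fun k => ξ k * lam ^ w k) = ξ}) ∪ {(0 : K)}).Finite :=
    Set.Finite.union (Set.Finite.image _ (hbad1.union hbad2)) (Set.finite_singleton 0)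
  obtain ⟨x, hx⟩ := hbadK.infinite_compl.nonempty
  have hx0 : x ≠ 0 := fun h => hx (Or.inr (by simp [h]))
  set lam : Kˣ := Units.mk0 x hx0 with hlam
  have hlam1 : torusEval n (fun k => ξ k * lam ^ w k) f ≠ 0 := fun h =>
    hx (Or.inl ⟨lam, Or.inl h, rfl⟩)
  have hlam2 : (fun k => ξ k * lam ^ w k) ≠ ξ := fun h =>
    hx (Or.inl ⟨lam, Or.inr h, rfl⟩)
  set ζ : Fin n → Kˣ := fun k => ξ k * lam ^ w k with hζ
  -- the twisted point lies in the zero set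
  have hqZ : ∀ i, ∑ j, C.ev (σ i j) v * ((∏ k, ζ k ^ a i j k : Kˣ) : K) = 0 := by
    intro i
    have hterm : ∀ j, ((∏ k, ζ k ^ a i j k : Kˣ) : K) =
        ((∏ k, ξ k ^ a i j k : Kˣ) : K) * (lam : K) ^ (∑ k, w k * a i 0 k) := by
      intro j
      rw [hζ]
      rw [prod_units_pow ξ lam w (a i j), he i j, Units.val_mul]
      congr 1
      exact ((Units.coeHom K).map_zpow lam _)
    calc ∑ j, C.ev (σ i j) v * ((∏ k, ζ k ^ a i j k : Kˣ) : K)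
        = ∑ j, C.ev (σ i j) v * ((∏ k, ξ k ^ a i j k : Kˣ) : K)
            * (lam : K) ^ (∑ k, w k * a i 0 k) := by
          refine Finset.sum_congr rfl fun j _ => ?_
          rw [hterm j, mul_assoc]
      _ = (∑ j, C.ev (σ i j) v * ((∏ k, ξ k ^ a i j k : Kˣ) : K))
            * (lam : K) ^ (∑ k, w k * a i 0 k) := by rw [Finset.sum_mul]
      _ = 0 := by rw [hpZ i, zero_mul]
  -- the twisted point lies in U
  have hζU₂ : ζ ∈ U₂ := by
    refine hpre (hsubO ?_)
    exact (PrimeSpectrum.mem_basicOpen f _).mpr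
      (fun hker => hlam1 (by rwa [RingHom.mem_ker] at hker))
  have hqU : ((v, ζ) : C.Point × (Fin n → Kˣ)) ∈ U :=
    hUprod ⟨mem_of_mem_nhds hU₁, hζU₂⟩
  have := hUsub ⟨hqU, hqZ⟩
  rw [Set.mem_singleton_iff, Prod.mk.injEq] at this
  exact hlam2 this.2
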